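/- Let d_1, …, d_n be real numbers such that all the tail values t_1, …, t_n are defined and nonzero. Then the chain matrix A(d_1,…,d_n) is nonsingular and its signature equals Σ_{i=1}^n sgn(t_i). -/

import Mathlib

/-- Tail values of the negative continued fraction: `t n = d n` and
`t i = d i - 1 / t (i+1)` for `i < n`. -/
noncomputable def tailVal (d : ℕ → ℝ) (n : ℕ) (i : ℕ) : ℝ :=
  if h : n ≤ i then d n
  else d i - 1 / tailVal d n (i + 1)
termination_by n - i
decreasing_by omega

/-- The `n × n` chain (tridiagonal) matrix with diagonal entries
`d 1, …, d n` and off-diagonal entries `1`. -/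
def chainMatrix (d : ℕ → ℝ) (n : ℕ) : Matrix (Fin n) (Fin n) ℝ :=
  Matrix.of fun i j =>
    if i = j then d (i.1 + 1)
    else if i.1 + 1 = j.1 ∨ j.1 + 1 = i.1 then 1 else 0

/-- The signature of a real symmetric matrix: the number of positive
eigenvalues minus the number of negative eigenvalues, with multiplicity. -/
noncomputable def matSignature {n : ℕ} (A : Matrix (Fin n) (Fin n) ℝ)
    (hA : A.IsHermitian) : ℤ :=
  ((Finset.univ.filter fun i => 0 < hA.eigenvalues i).card : ℤ) -
  ((Finset.univ.filter fun i => hA.eigenvalues i < 0).card : ℤ)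

/-- `sgn x` is `1`, `-1`, `0` according as `x > 0`, `x < 0`, `x = 0`. -/
noncomputable def sgnR (x : ℝ) : ℤ :=
  if 0 < x then 1 else if x < 0 then -1 else 0


open Finset Matrix

lemma posCount_le {n : ℕ} (t u : Fin n → ℝ) (R : Matrix (Fin n) (Fin n) ℝ)
    (h : ∀ x : Fin n → ℝ, ∑ i, u i * x i ^ 2 = ∑ j, t j * (R.mulVec x j) ^ 2) :
    (univ.filter fun i => 0 < u i).card ≤ (univ.filter fun j => 0 < t j).card := by
  by_contra hlt
  push_neg at hlt
  set S := univ.filter fun i : Fin n => 0 < u i with hS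
  set T := univ.filter fun j : Fin n => 0 < t j with hT
  classical
  let F : (Fin n → ℝ) →ₗ[ℝ] ({i : Fin n // i ∉ S} → ℝ) :=
    LinearMap.funLeft ℝ ℝ Subtype.val
  let G : (Fin n → ℝ) →ₗ[ℝ] ({j : Fin n // j ∈ T} → ℝ) :=
    (LinearMap.funLeft ℝ ℝ Subtype.val).comp R.mulVecLin
  have hdim : ∀ (m : ℕ) (P : (Fin n → ℝ) →ₗ[ℝ] ({i : Fin n // i ∈ (univ : Finset (Fin n)).filter (fun _ => True)} → ℝ)), True := fun _ _ => trivial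
  have hFker : n - Fintype.card {i : Fin n // i ∉ S} ≤ Module.finrank ℝ (LinearMap.ker F) := by
    have h1 := LinearMap.finrank_range_add_finrank_ker F
    have h2 : Module.finrank ℝ (LinearMap.range F) ≤ Fintype.card {i : Fin n // i ∉ S} := by
      simpa using (LinearMap.range F).finrank_le
    simp [Module.finrank_pi] at h1
    omega
  have hGker : n - Fintype.card {j : Fin n // j ∈ T} ≤ Module.finrank ℝ (LinearMap.ker G) := by
    have h1 := LinearMap.finrank_range_add_finrank_ker G
    have h2 : Module.finrank ℝ (LinearMap.range G) ≤ Fintype.card {j : Fin n // j ∈ T} := by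
      simpa using (LinearMap.range G).finrank_le
    simp [Module.finrank_pi] at h1
    omega
  have hcardS : Fintype.card {i : Fin n // i ∉ S} = n - S.card := by
    simp [Fintype.card_subtype, filter_not, card_sdiff_of_subset (filter_subset _ _), Finset.card_univ_sdiff]
  have hcardT : Fintype.card {j : Fin n // j ∈ T} = T.card := by
    simp [Fintype.card_subtype]
  have hSn : S.card ≤ n := le_trans (card_filter_le univ _) (by simp)
  have hsum := Submodule.finrank_sup_add_finrank_inf_eq (LinearMap.ker F) (LinearMap.ker G)
  have htop : Module.finrank ℝ (LinearMap.ker F ⊔ LinearMap.ker G : Submodule ℝ (Fin n → ℝ)) ≤ n := by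
    simpa [Module.finrank_pi] using (LinearMap.ker F ⊔ LinearMap.ker G).finrank_le
  have hpos : 0 < Module.finrank ℝ (LinearMap.ker F ⊓ LinearMap.ker G : Submodule ℝ (Fin n → ℝ)) := by
    omega
  have hne : (LinearMap.ker F ⊓ LinearMap.ker G : Submodule ℝ (Fin n → ℝ)) ≠ ⊥ := by
    intro hb
    rw [hb, finrank_bot] at hpos
    exact lt_irrefl 0 hpos
  obtain ⟨x, hx, hx0⟩ := Submodule.exists_mem_ne_zero_of_ne_bot hne
  obtain ⟨hxF, hxG⟩ := Submodule.mem_inf.mp hx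
  rw [LinearMap.mem_ker] at hxF hxG
  have hxS : ∀ i : Fin n, i ∉ S → x i = 0 := by
    intro i hi
    have := congrFun hxF ⟨i, hi⟩
    simpa [F, LinearMap.funLeft] using this
  have hxT : ∀ j : Fin n, j ∈ T → R.mulVec x j = 0 := by
    intro j hj
    have := congrFun hxG ⟨j, hj⟩
    simpa [G, LinearMap.funLeft] using this
  have hL : 0 < ∑ i, u i * x i ^ 2 := by
    obtain ⟨i0, hi0⟩ : ∃ i, x i ≠ 0 := Function.ne_iff.mp hx0
    have hi0S : i0 ∈ S := by
      by_contra hc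
      exact hi0 (hxS i0 hc)
    refine Finset.sum_pos' (fun i _ => ?_) ⟨i0, mem_univ i0, ?_⟩
    · by_cases hi : i ∈ S
      · have : 0 < u i := (mem_filter.mp hi).2
        positivity
      · simp [hxS i hi]
    · have hu : 0 < u i0 := (mem_filter.mp hi0S).2
      have : 0 < x i0 ^ 2 := by positivity
      positivity
  have hR : ∑ j, t j * (R.mulVec x j) ^ 2 ≤ 0 := by
    refine Finset.sum_nonpos fun j _ => ?_
    by_cases hj : j ∈ T
    · simp [hxT j hj]
    · have : ¬ 0 < t j := by
        intro hc
        exact hj (mem_filter.mpr ⟨mem_univ j, hc⟩)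
      have ht' : t j ≤ 0 := le_of_not_gt this
      have : (0:ℝ) ≤ (R.mulVec x j) ^ 2 := sq_nonneg _
      nlinarith
  rw [h x] at hL
  linarith

lemma quad_of_congr {n : ℕ} (u t : Fin n → ℝ) (R : Matrix (Fin n) (Fin n) ℝ)
    (h : Matrix.diagonal u = Rᵀ * Matrix.diagonal t * R) (x : Fin n → ℝ) :
    ∑ i, u i * x i ^ 2 = ∑ j, t j * (R.mulVec x j) ^ 2 := by
  have h1 : ∑ i, u i * x i ^ 2 = x ⬝ᵥ (Matrix.diagonal u).mulVec x := by
    simp [dotProduct, mulVec_diagonal]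
    apply Finset.sum_congr rfl
    intro i _
    ring
  have h2 : ∑ j, t j * (R.mulVec x j) ^ 2 = (R.mulVec x) ⬝ᵥ (Matrix.diagonal t).mulVec (R.mulVec x) := by
    simp [dotProduct, mulVec_diagonal]
    apply Finset.sum_congr rfl
    intro i _
    ring
  rw [h1, h2, h]
  rw [← Matrix.mulVec_mulVec, ← Matrix.mulVec_mulVec, Matrix.dotProduct_mulVec,
    Matrix.vecMul_transpose]

lemma congr_inv {n : ℕ} (u t : Fin n → ℝ) (R : Matrix (Fin n) (Fin n) ℝ)
    (hR : IsUnit R.det)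
    (h : Matrix.diagonal u = Rᵀ * Matrix.diagonal t * R) :
    Matrix.diagonal t = (R⁻¹)ᵀ * Matrix.diagonal u * R⁻¹ := by
  rw [h]
  rw [Matrix.transpose_nonsing_inv]
  symm
  calc (Rᵀ)⁻¹ * (Rᵀ * Matrix.diagonal t * R) * R⁻¹
      = ((Rᵀ)⁻¹ * Rᵀ) * Matrix.diagonal t * (R * R⁻¹) := by
        simp only [Matrix.mul_assoc]
    _ = Matrix.diagonal t := by
        rw [Matrix.nonsing_inv_mul _ (by simpa [Matrix.det_transpose] using hR),
          Matrix.mul_nonsing_inv _ hR]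
        simp

lemma posCount_eq {n : ℕ} (t u : Fin n → ℝ) (R : Matrix (Fin n) (Fin n) ℝ)
    (hR : IsUnit R.det)
    (h : Matrix.diagonal u = Rᵀ * Matrix.diagonal t * R) :
    (univ.filter fun i => 0 < u i).card = (univ.filter fun j => 0 < t j).card := by
  refine le_antisymm (posCount_le t u R (quad_of_congr u t R h)) ?_
  exact posCount_le u t R⁻¹ (quad_of_congr t u R⁻¹ (congr_inv u t R hR h))

lemma negCount_eq {n : ℕ} (t u : Fin n → ℝ) (R : Matrix (Fin n) (Fin n) ℝ)
    (hR : IsUnit R.det)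
    (h : Matrix.diagonal u = Rᵀ * Matrix.diagonal t * R) :
    (univ.filter fun i => u i < 0).card = (univ.filter fun j => t j < 0).card := by
  have h' : Matrix.diagonal (fun i => -u i) = Rᵀ * Matrix.diagonal (fun j => -t j) * R := by
    rw [← Matrix.diagonal_neg, ← Matrix.diagonal_neg, h, Matrix.mul_neg, Matrix.neg_mul]
  have := posCount_eq (fun j => -t j) (fun i => -u i) R hR h'
  simpa [neg_pos] using this



lemma tailVal_lt (d : ℕ → ℝ) {n i : ℕ} (h : i < n) :
    tailVal d n i = d i - 1 / tailVal d n (i + 1) := by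
  rw [tailVal, dif_neg (by omega)]

lemma tailVal_last (d : ℕ → ℝ) (n : ℕ) : tailVal d n n = d n := by
  rw [tailVal, dif_pos le_rfl]

noncomputable def Umat (d : ℕ → ℝ) (n : ℕ) : Matrix (Fin n) (Fin n) ℝ :=
  Matrix.of fun i j =>
    if i = j then 1 else if i.1 = j.1 + 1 then 1 / tailVal d n (i.1 + 1) else 0

lemma Umat_det (d : ℕ → ℝ) (n : ℕ) : (Umat d n).det = 1 := by
  rw [← Matrix.det_transpose]
  rw [Matrix.det_of_upperTriangular]
  · simp [Umat]
  · intro i j hij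
    have hj : (j : ℕ) < (i : ℕ) := hij
    simp only [Umat, Matrix.transpose_apply, Matrix.of_apply]
    rw [if_neg (Fin.ne_of_val_ne (by omega)), if_neg (by omega)]

lemma chain_factor (d : ℕ → ℝ) (n : ℕ)
    (ht : ∀ i, 1 ≤ i → i ≤ n → tailVal d n i ≠ 0) :
    chainMatrix d n =
      (Umat d n)ᵀ * Matrix.diagonal (fun i : Fin n => tailVal d n (i.1 + 1)) * Umat d n := by
  ext i j
  rw [Matrix.mul_assoc, Matrix.mul_apply]
  simp only [Matrix.transpose_apply, Matrix.diagonal_mul]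
  have hn : 1 ≤ n := i.pos
  by_cases hlt : i.1 + 1 < n
  · have hi'ne : (⟨i.1 + 1, hlt⟩ : Fin n) ≠ i :=
      Fin.ne_of_val_ne (Nat.succ_ne_self i.1)
    have hs : tailVal d n (i.1 + 1 + 1) ≠ 0 := ht _ (by omega) (by omega)
    have hsplit : ∀ k : Fin n,
        Umat d n k i * (tailVal d n (k.1 + 1) * Umat d n k j)
        = (if k = i then tailVal d n (i.1 + 1) * Umat d n i j else 0)
          + (if k = (⟨i.1 + 1, hlt⟩ : Fin n) then Umat d n (⟨i.1 + 1, hlt⟩ : Fin n) j else 0) := by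
      intro k
      by_cases hk : k = i
      · subst hk
        rw [if_pos rfl, if_neg (fun h => hi'ne h.symm)]
        have hU : Umat d n k k = 1 := by simp [Umat]
        rw [hU, one_mul, add_zero]
      · by_cases hk' : k = (⟨i.1 + 1, hlt⟩ : Fin n)
        · subst hk'
          rw [if_neg hk, if_pos rfl, zero_add]
          have hU : Umat d n (⟨i.1 + 1, hlt⟩ : Fin n) i = 1 / tailVal d n (i.1 + 1 + 1) := by
            simp only [Umat, Matrix.of_apply]
            rw [if_neg hk]
            simp
          rw [hU]
          rw [← mul_assoc, one_div, inv_mul_cancel₀ hs, one_mul]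
        · have hU : Umat d n k i = 0 := by
            simp only [Umat, Matrix.of_apply]
            rw [if_neg hk, if_neg (fun h => hk' (Fin.ext h))]
          rw [hU, zero_mul, if_neg hk, if_neg hk', add_zero]
    rw [Finset.sum_congr rfl (fun k _ => hsplit k), Finset.sum_add_distrib,
      Finset.sum_ite_eq', Finset.sum_ite_eq']
    simp only [Finset.mem_univ, if_pos]
    by_cases hji : j = i
    · subst hji
      have h1 : Umat d n j j = 1 := by simp [Umat]
      have h2 : Umat d n (⟨j.1 + 1, hlt⟩ : Fin n) j = 1 / tailVal d n (j.1 + 1 + 1) := by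
        simp only [Umat, Matrix.of_apply]
        rw [if_neg (fun h => hi'ne h)]
        simp
      rw [h1, h2, mul_one]
      have h3 : tailVal d n (j.1 + 1) = d (j.1 + 1) - 1 / tailVal d n (j.1 + 1 + 1) :=
        tailVal_lt d hlt
      simp only [chainMatrix, Matrix.of_apply, if_pos rfl, ite_true]
      rw [h3]
      ring
    · by_cases hij1 : i.1 + 1 = j.1
      · have h1 : Umat d n i j = 0 := by
          simp only [Umat, Matrix.of_apply]
          rw [if_neg (fun h => hji h.symm), if_neg (by omega)]
        have h2 : Umat d n (⟨i.1 + 1, hlt⟩ : Fin n) j = 1 := by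
          simp only [Umat, Matrix.of_apply]
          rw [if_pos (Fin.ext (by simpa using hij1))]
        rw [h1, h2, mul_zero, zero_add]
        simp only [chainMatrix, Matrix.of_apply]
        rw [if_neg (fun h => hji h.symm), if_pos (Or.inl hij1)]
      · by_cases hji1 : j.1 + 1 = i.1
        · have h1 : Umat d n i j = 1 / tailVal d n (i.1 + 1) := by
            simp only [Umat, Matrix.of_apply]
            rw [if_neg (fun h => hji h.symm), if_pos (by omega)]
          have h2 : Umat d n (⟨i.1 + 1, hlt⟩ : Fin n) j = 0 := by
            simp only [Umat, Matrix.of_apply]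
            have e : ((⟨i.1 + 1, hlt⟩ : Fin n) : ℕ) = i.1 + 1 := rfl
            rw [if_neg (fun h => by rw [Fin.ext_iff, e] at h; omega),
              if_neg (fun h => by omega)]
          have hs1 : tailVal d n (i.1 + 1) ≠ 0 := ht _ (by omega) (by omega)
          rw [h1, h2, add_zero, one_div, mul_inv_cancel₀ hs1]
          simp only [chainMatrix, Matrix.of_apply]
          rw [if_neg (fun h => hji h.symm), if_pos (Or.inr hji1)]
        · have h1 : Umat d n i j = 0 := by
            simp only [Umat, Matrix.of_apply]
            rw [if_neg (fun h => hji h.symm), if_neg (by omega)]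
          have h2 : Umat d n (⟨i.1 + 1, hlt⟩ : Fin n) j = 0 := by
            simp only [Umat, Matrix.of_apply]
            have e : ((⟨i.1 + 1, hlt⟩ : Fin n) : ℕ) = i.1 + 1 := rfl
            rw [if_neg (fun h => by rw [Fin.ext_iff, e] at h; omega),
              if_neg (fun h => by omega)]
          rw [h1, h2, mul_zero, zero_add]
          simp only [chainMatrix, Matrix.of_apply]
          rw [if_neg (fun h => hji h.symm), if_neg (by omega)]
  · have hin : i.1 + 1 = n := by omega
    have hsplit : ∀ k : Fin n,
        Umat d n k i * (tailVal d n (k.1 + 1) * Umat d n k j)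
        = (if k = i then tailVal d n (i.1 + 1) * Umat d n i j else 0) := by
      intro k
      by_cases hk : k = i
      · subst hk
        rw [if_pos rfl]
        have hU : Umat d n k k = 1 := by simp [Umat]
        rw [hU, one_mul]
      · have hU : Umat d n k i = 0 := by
          simp only [Umat, Matrix.of_apply]
          rw [if_neg hk, if_neg (by have := k.2; omega)]
        rw [hU, zero_mul, if_neg hk]
    rw [Finset.sum_congr rfl (fun k _ => hsplit k), Finset.sum_ite_eq']
    simp only [Finset.mem_univ, if_pos]
    have htv : tailVal d n (i.1 + 1) = d n := by rw [hin, tailVal_last]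
    by_cases hji : j = i
    · subst hji
      have h1 : Umat d n j j = 1 := by simp [Umat]
      rw [h1, mul_one, htv]
      simp only [chainMatrix, Matrix.of_apply, if_pos rfl, ite_true]
      rw [hin]
    · by_cases hji1 : j.1 + 1 = i.1
      · have h1 : Umat d n i j = 1 / tailVal d n (i.1 + 1) := by
          simp only [Umat, Matrix.of_apply]
          rw [if_neg (fun h => hji h.symm), if_pos (by omega)]
        have hs1 : tailVal d n (i.1 + 1) ≠ 0 := ht _ (by omega) (by omega)
        rw [h1, one_div, mul_inv_cancel₀ hs1]
        simp only [chainMatrix, Matrix.of_apply]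
        rw [if_neg (fun h => hji h.symm), if_pos (Or.inr hji1)]
      · have h1 : Umat d n i j = 0 := by
          simp only [Umat, Matrix.of_apply]
          rw [if_neg (fun h => hji h.symm), if_neg (by omega)]
        rw [h1, mul_zero]
        simp only [chainMatrix, Matrix.of_apply]
        rw [if_neg (fun h => hji h.symm), if_neg (by have := j.2; omega)]

/-- if all tail values `t 1, …, t n` are nonzero, the chain
matrix `A(d 1, …, d n)` is nonsingular and its signature is `∑ sgn (t i)`. -/
theorem stmt8 (n : ℕ) (d : ℕ → ℝ)
    (ht : ∀ i, 1 ≤ i → i ≤ n → tailVal d n i ≠ 0)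
    (hA : (chainMatrix d n).IsHermitian) :
    (chainMatrix d n).det ≠ 0 ∧
    matSignature (chainMatrix d n) hA =
      ∑ i ∈ Finset.range n, sgnR (tailVal d n (i + 1)) := by
  classical
  set t : Fin n → ℝ := fun i => tailVal d n (i.1 + 1) with htdef
  have htne : ∀ i : Fin n, t i ≠ 0 := fun i => ht _ (by omega) i.2
  have hfac := chain_factor d n ht
  have hUdet : IsUnit (Umat d n).det := by rw [Umat_det]; exact isUnit_one
  -- determinant
  have hdet : (chainMatrix d n).det = ∏ i, t i := by
    rw [hfac, Matrix.det_mul, Matrix.det_mul, Matrix.det_transpose, Umat_det,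
      Matrix.det_diagonal]
    ring
  have hdetne : (chainMatrix d n).det ≠ 0 := by
    rw [hdet]
    exact Finset.prod_ne_zero_iff.mpr fun i _ => htne i
  refine ⟨hdetne, ?_⟩
  -- congruence between eigenvalue diagonal and tail diagonal
  set V : Matrix (Fin n) (Fin n) ℝ := (hA.eigenvectorUnitary : Matrix (Fin n) (Fin n) ℝ) with hVdef
  have h0 : star V * (chainMatrix d n) * V
      = Matrix.diagonal (RCLike.ofReal ∘ hA.eigenvalues) :=
    by simpa [Unitary.conjStarAlgAut_apply] using hA.conjStarAlgAut_star_eigenvectorUnitary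
  have hcoe : (RCLike.ofReal ∘ hA.eigenvalues : Fin n → ℝ) = hA.eigenvalues := rfl
  rw [hcoe] at h0
  have hstarV : star V = Vᵀ := by
    rw [Matrix.star_eq_conjTranspose]
    ext i j
    simp [Matrix.conjTranspose_apply]
  have hcong : Matrix.diagonal hA.eigenvalues
      = (Umat d n * V)ᵀ * Matrix.diagonal t * (Umat d n * V) := by
    rw [← h0, hfac, hstarV, Matrix.transpose_mul]
    simp only [Matrix.mul_assoc]
    rfl
  have hVdet : IsUnit V.det := by
    have hV1 : V * star V = 1 := Matrix.mem_unitaryGroup_iff.mp (hA.eigenvectorUnitary).2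
    exact IsUnit.of_mul_eq_one _ (by rw [← Matrix.det_mul, hV1, Matrix.det_one])
  have hRdet : IsUnit (Umat d n * V).det := by
    rw [Matrix.det_mul]
    exact hUdet.mul hVdet
  have hpos := posCount_eq t hA.eigenvalues (Umat d n * V) hRdet hcong
  have hneg := negCount_eq t hA.eigenvalues (Umat d n * V) hRdet hcong
  have hsig : matSignature (chainMatrix d n) hA =
      ((univ.filter fun i : Fin n => 0 < t i).card : ℤ) -
      ((univ.filter fun i : Fin n => t i < 0).card : ℤ) := by
    unfold matSignature
    rw [hpos, hneg]
  rw [hsig]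
  have hsum : ∑ i ∈ Finset.range n, sgnR (tailVal d n (i + 1)) = ∑ i : Fin n, sgnR (t i) :=
    (Fin.sum_univ_eq_sum_range (fun m => sgnR (tailVal d n (m + 1))) n).symm
  rw [hsum]
  rw [← Finset.sum_filter_add_sum_filter_not univ (fun i : Fin n => 0 < t i)]
  have h1 : ∑ i ∈ univ.filter (fun i : Fin n => 0 < t i), sgnR (t i)
      = ((univ.filter fun i : Fin n => 0 < t i).card : ℤ) := by
    rw [Finset.sum_congr rfl (fun i hi => ?_), Finset.sum_const, nsmul_eq_mul, mul_one]
    have := (Finset.mem_filter.mp hi).2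
    simp [sgnR, this]
  have hfilt : univ.filter (fun i : Fin n => ¬ 0 < t i)
      = univ.filter (fun i : Fin n => t i < 0) := by
    apply Finset.filter_congr
    intro i _
    constructor
    · intro h
      rcases lt_trichotomy (t i) 0 with h'|h'|h'
      · exact h'
      · exact absurd h' (htne i)
      · exact absurd h' h
    · intro h
      exact not_lt.mpr h.le
  have h2 : ∑ i ∈ univ.filter (fun i : Fin n => ¬ 0 < t i), sgnR (t i)
      = -((univ.filter fun i : Fin n => t i < 0).card : ℤ) := by
    rw [hfilt]
    rw [Finset.sum_congr rfl (fun i hi => ?_), Finset.sum_const, nsmul_eq_mul, mul_neg_one]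
    have h' := (Finset.mem_filter.mp hi).2
    simp [sgnR, h', not_lt.mpr h'.le]
  rw [h1, h2]
  ring
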